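/- Let p be an odd prime, l ≥ 1, and n coprime to p. The Haar measure (normalized restriction of the Haar measure on Z_p to S_{p^{-l}}(1)) is invariant under the monomial map ψ_n(x) = x^n on S_{p^{-l}}(1). -/

import Mathlib

open MeasureTheory

theorem aux_norm_pow_sub_pow (p : ℕ) [Fact p.Prime] (n : ℕ) (hn : ¬ p ∣ n)
    (x y : ℤ_[p]) (hx : ‖x - 1‖ < 1) (hy : ‖y - 1‖ < 1) :
    ‖x ^ n - y ^ n‖ = ‖x - y‖ := by
  set σ : ℤ_[p] := ∑ i ∈ Finset.range n, x ^ i * y ^ (n - 1 - i) with hσ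
  have hdvd1 : (p : ℤ_[p]) ∣ x - 1 := (PadicInt.norm_lt_one_iff_dvd _).mp hx
  have hdvd2 : (p : ℤ_[p]) ∣ y - 1 := (PadicInt.norm_lt_one_iff_dvd _).mp hy
  have hdvdσ : (p : ℤ_[p]) ∣ σ - n := by
    have : σ - n = ∑ i ∈ Finset.range n, (x ^ i * y ^ (n - 1 - i) - 1) := by
      rw [Finset.sum_sub_distrib, Finset.sum_const, Finset.card_range]
      simp
      exact hσ
    rw [this]
    refine Finset.dvd_sum fun i _ => ?_
    have h1 : (p : ℤ_[p]) ∣ x ^ i - 1 := by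
      have := sub_dvd_pow_sub_pow x 1 i
      simpa using hdvd1.trans this
    have h2 : (p : ℤ_[p]) ∣ y ^ (n - 1 - i) - 1 := by
      have := sub_dvd_pow_sub_pow y 1 (n - 1 - i)
      simpa using hdvd2.trans this
    have : x ^ i * y ^ (n - 1 - i) - 1
        = (x ^ i - 1) * y ^ (n - 1 - i) + (y ^ (n - 1 - i) - 1) := by ring
    rw [this]
    exact dvd_add (h1.mul_right _) h2
  have hσn : ‖σ - (n : ℤ_[p])‖ < 1 := (PadicInt.norm_lt_one_iff_dvd _).mpr hdvdσ
  have hnn : ‖(n : ℤ_[p])‖ = 1 := by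
    have h1 : ‖(n : ℤ_[p])‖ ≤ 1 := PadicInt.norm_le_one _
    have h2 : ¬ ‖((n : ℤ) : ℤ_[p])‖ < 1 := by
      rw [PadicInt.norm_int_lt_one_iff_dvd]
      exact_mod_cast hn
    push_cast at h2
    linarith [not_lt.mp h2]
  have hσ1 : ‖σ‖ = 1 := by
    have hle : ‖σ‖ ≤ 1 := PadicInt.norm_le_one _
    have hmax : (1:ℝ) ≤ max ‖σ‖ ‖σ - n‖ := by
      have h := PadicInt.nonarchimedean σ (-(σ - (n : ℤ_[p])))
      rw [norm_neg] at h
      have he : σ + -(σ - (n : ℤ_[p])) = (n : ℤ_[p]) := by ring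
      rw [he, hnn] at h
      exact h
    rcases max_cases ‖σ‖ ‖σ - (n : ℤ_[p])‖ with ⟨he, _⟩ | ⟨he, _⟩ <;> rw [he] at hmax <;> linarith
  have hmul : σ * (x - y) = x ^ n - y ^ n := geom_sum₂_mul x y n
  rw [← hmul, norm_mul, hσ1, one_mul]

theorem stmt_18 (p : ℕ) [Fact p.Prime] (hp : p ≠ 2) (l : ℕ) (hl : 1 ≤ l)
    (n : ℕ) (hn : n.Coprime p)
    [MeasurableSpace ℤ_[p]] [BorelSpace ℤ_[p]]
    (ψ : {x : ℤ_[p] // ‖x - 1‖ = (p : ℝ) ^ (-(l : ℤ))} →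
         {x : ℤ_[p] // ‖x - 1‖ = (p : ℝ) ^ (-(l : ℤ))})
    (hψ : ∀ x : {x : ℤ_[p] // ‖x - 1‖ = (p : ℝ) ^ (-(l : ℤ))},
      (ψ x : ℤ_[p]) = (x : ℤ_[p]) ^ n)
    (μ : Measure {x : ℤ_[p] // ‖x - 1‖ = (p : ℝ) ^ (-(l : ℤ))})
    (hprob : IsProbabilityMeasure μ)
    (hHaar : ∀ k : ℕ, 1 ≤ k → ∀ a : {x : ℤ_[p] // ‖x - 1‖ = (p : ℝ) ^ (-(l : ℤ))},
      μ {x | dist x a ≤ (p : ℝ) ^ (-(l + k : ℤ))}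
        = (((p - 1) * p ^ (k - 1) : ℕ) : ENNReal)⁻¹) :
    MeasurePreserving ψ μ μ := by
  haveI : BorelSpace {x : ℤ_[p] // ‖x - 1‖ = (p : ℝ) ^ (-(l : ℤ))} := Subtype.borelSpace _
  have hp1 : (1:ℝ) < p := by exact_mod_cast (Fact.out : p.Prime).one_lt
  have hpdvd : ¬ p ∣ n := ((Fact.out : p.Prime).coprime_iff_not_dvd).mp hn.symm
  -- dist on the subtype
  have hdS : ∀ x y : {x : ℤ_[p] // ‖x - 1‖ = (p : ℝ) ^ (-(l : ℤ))},
      dist x y = ‖(x : ℤ_[p]) - (y : ℤ_[p])‖ := by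
    intro x y
    rw [Subtype.dist_eq]
    exact dist_eq_norm _ _
  have hsmall : ∀ x : {x : ℤ_[p] // ‖x - 1‖ = (p : ℝ) ^ (-(l : ℤ))}, ‖(x : ℤ_[p]) - 1‖ < 1 := by
    intro x
    rw [x.2]
    have : -(l:ℤ) < 0 := by omega
    exact zpow_lt_one_of_neg₀ hp1 this
  have hiso : Isometry ψ := by
    apply Isometry.of_dist_eq
    intro x y
    rw [hdS (ψ x) (ψ y), hdS x y, hψ, hψ]
    exact aux_norm_pow_sub_pow p n hpdvd _ _ (hsmall x) (hsmall y)
  have hmeas : Measurable ψ := hiso.continuous.measurable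
  have hultra : ∀ x y z : {x : ℤ_[p] // ‖x - 1‖ = (p : ℝ) ^ (-(l : ℤ))},
      dist x z ≤ max (dist x y) (dist y z) := by
    intro x y z
    rw [hdS x z, hdS x y, hdS y z]
    have h : ((x:ℤ_[p]) - z) = ((x:ℤ_[p]) - y) + ((y:ℤ_[p]) - z) := by ring
    rw [h]
    exact PadicInt.nonarchimedean _ _
  have hball : ∀ (k : ℕ) (x b : {x : ℤ_[p] // ‖x - 1‖ = (p : ℝ) ^ (-(l : ℤ))}),
      dist x b ≤ (p:ℝ) ^ (-(l + k : ℤ)) ↔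
      PadicInt.toZModPow (l + k) (x : ℤ_[p]) = PadicInt.toZModPow (l + k) (b : ℤ_[p]) := by
    intro k x b
    rw [hdS x b]
    have hcast : (-(l + k : ℤ)) = -(((l + k : ℕ) : ℤ)) := by push_cast; ring
    rw [hcast, PadicInt.norm_le_pow_iff_mem_span_pow, ← PadicInt.ker_toZModPow,
      RingHom.mem_ker, map_sub, sub_eq_zero]
  have key : ∀ (k : ℕ), 1 ≤ k → ∀ a : {x : ℤ_[p] // ‖x - 1‖ = (p : ℝ) ^ (-(l : ℤ))},
      μ (ψ ⁻¹' {x | dist x a ≤ (p:ℝ) ^ (-(l + k : ℤ))})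
        = μ {x | dist x a ≤ (p:ℝ) ^ (-(l + k : ℤ))} := by
    intro k hk a
    haveI : NeZero (p ^ (l + k)) := ⟨pow_ne_zero _ (Fact.out : p.Prime).ne_zero⟩
    set f : {x : ℤ_[p] // ‖x - 1‖ = (p : ℝ) ^ (-(l : ℤ))} → ZMod (p ^ (l + k)) :=
      fun x => PadicInt.toZModPow (l + k) (x : ℤ_[p]) with hf
    have hfib_eq : ∀ b, f ⁻¹' {f b} = {x | dist x b ≤ (p:ℝ) ^ (-(l + k : ℤ))} := by
      intro b
      ext x
      simp only [Set.mem_preimage, Set.mem_singleton_iff, Set.mem_setOf_eq, hf]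
      exact (hball k x b).symm
    have hfibmeas : ∀ c, MeasurableSet (f ⁻¹' {c}) := by
      intro c
      rcases Set.eq_empty_or_nonempty (f ⁻¹' {c}) with h | ⟨b, hb⟩
      · rw [h]; exact MeasurableSet.empty
      · have hc : f b = c := hb
        rw [← hc, hfib_eq b]
        exact measurableSet_closedBall
    have hμfib : ∀ b, μ (f ⁻¹' {f b}) = (((p - 1) * p ^ (k - 1) : ℕ) : ENNReal)⁻¹ := by
      intro b
      rw [hfib_eq b]
      exact hHaar k hk b
    have hle : ∀ c, μ (ψ ⁻¹' (f ⁻¹' {c})) ≤ μ (f ⁻¹' {c}) := by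
      intro c
      rcases Set.eq_empty_or_nonempty (ψ ⁻¹' (f ⁻¹' {c})) with h | ⟨b, hb⟩
      · rw [h]; simp
      · have hc : f (ψ b) = c := hb
        have hsub : ψ ⁻¹' (f ⁻¹' {c}) ⊆ f ⁻¹' {f b} := by
          intro x hx
          have hx' : f (ψ x) = c := hx
          have hdd : dist (ψ x) (ψ b) ≤ (p:ℝ) ^ (-(l + k : ℤ)) := by
            refine (hball k (ψ x) (ψ b)).mpr ?_
            show f (ψ x) = f (ψ b)
            rw [hx', hc]
          have hxb : dist x b ≤ (p:ℝ) ^ (-(l + k : ℤ)) := by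
            rwa [hiso.dist_eq] at hdd
          exact (hball k x b).mp hxb
        calc μ (ψ ⁻¹' (f ⁻¹' {c})) ≤ μ (f ⁻¹' {f b}) := measure_mono hsub
          _ = (((p - 1) * p ^ (k - 1) : ℕ) : ENNReal)⁻¹ := hμfib b
          _ = μ (f ⁻¹' {f (ψ b)}) := (hμfib (ψ b)).symm
          _ = μ (f ⁻¹' {c}) := by rw [hc]
    have hsum1 : ∑ c : ZMod (p ^ (l + k)), μ (f ⁻¹' {c}) = 1 := by
      rw [MeasureTheory.sum_measure_preimage_singleton Finset.univ (fun c _ => hfibmeas c)]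
      rw [Finset.coe_univ, Set.preimage_univ, measure_univ]
    have hsum2 : ∑ c : ZMod (p ^ (l + k)), μ (ψ ⁻¹' (f ⁻¹' {c})) = 1 := by
      calc ∑ c : ZMod (p ^ (l + k)), μ (ψ ⁻¹' (f ⁻¹' {c}))
          = ∑ c : ZMod (p ^ (l + k)), μ ((f ∘ ψ) ⁻¹' {c}) := rfl
        _ = μ ((f ∘ ψ) ⁻¹' (Finset.univ : Finset (ZMod (p ^ (l + k))))) :=
            MeasureTheory.sum_measure_preimage_singleton Finset.univ
              (fun c _ => hmeas (hfibmeas c))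
        _ = 1 := by rw [Finset.coe_univ, Set.preimage_univ, measure_univ]
    have hterm : ∀ c, μ (ψ ⁻¹' (f ⁻¹' {c})) = μ (f ⁻¹' {c}) := by
      intro c0
      by_contra hne
      have hlt : μ (ψ ⁻¹' (f ⁻¹' {c0})) < μ (f ⁻¹' {c0}) := lt_of_le_of_ne (hle c0) hne
      have h1 : μ (ψ ⁻¹' (f ⁻¹' {c0}))
          + ∑ c ∈ Finset.univ.erase c0, μ (ψ ⁻¹' (f ⁻¹' {c})) = 1 :=
        (Finset.add_sum_erase Finset.univ (fun c => μ (ψ ⁻¹' (f ⁻¹' {c})))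
          (Finset.mem_univ c0)).trans hsum2
      have h2 : μ (f ⁻¹' {c0}) + ∑ c ∈ Finset.univ.erase c0, μ (f ⁻¹' {c}) = 1 :=
        (Finset.add_sum_erase Finset.univ (fun c => μ (f ⁻¹' {c}))
          (Finset.mem_univ c0)).trans hsum1
      have hrest_le : ∑ c ∈ Finset.univ.erase c0, μ (ψ ⁻¹' (f ⁻¹' {c}))
          ≤ ∑ c ∈ Finset.univ.erase c0, μ (f ⁻¹' {c}) :=
        Finset.sum_le_sum (fun c _ => hle c)
      have hrest_ne : (∑ c ∈ Finset.univ.erase c0, μ (f ⁻¹' {c})) ≠ ⊤ := by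
        intro htop
        rw [htop] at h2
        simp at h2
      have hcontra : (1 : ENNReal) < 1 := by
        calc (1 : ENNReal) = μ (ψ ⁻¹' (f ⁻¹' {c0}))
              + ∑ c ∈ Finset.univ.erase c0, μ (ψ ⁻¹' (f ⁻¹' {c})) := h1.symm
          _ ≤ μ (ψ ⁻¹' (f ⁻¹' {c0})) + ∑ c ∈ Finset.univ.erase c0, μ (f ⁻¹' {c}) :=
              add_le_add (le_refl _) hrest_le
          _ < μ (f ⁻¹' {c0}) + ∑ c ∈ Finset.univ.erase c0, μ (f ⁻¹' {c}) :=
              ENNReal.add_lt_add_right hrest_ne hlt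
          _ = 1 := h2
      exact lt_irrefl _ hcontra
    have := hterm (f a)
    rwa [hfib_eq a] at this
  -- pi-system argument
  refine ⟨hmeas, ?_⟩
  haveI : IsProbabilityMeasure (Measure.map ψ μ) := Measure.isProbabilityMeasure_map hmeas.aemeasurable
  set C : Set (Set {x : ℤ_[p] // ‖x - 1‖ = (p : ℝ) ^ (-(l : ℤ))}) :=
    {s | ∃ (a : {x : ℤ_[p] // ‖x - 1‖ = (p : ℝ) ^ (-(l : ℤ))}) (k : ℕ), 1 ≤ k ∧ s = {x | dist x a ≤ (p:ℝ) ^ (-(l + k : ℤ))}} with hC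
  have hrpos : ∀ z : ℤ, (0:ℝ) < (p:ℝ) ^ z := fun z => zpow_pos (by linarith) z
  have hopen : ∀ u ∈ C, IsOpen u := by
    rintro u ⟨a, k, hk, rfl⟩
    rw [Metric.isOpen_iff]
    intro z hz
    refine ⟨(p:ℝ) ^ (-(l + k : ℤ)), hrpos _, ?_⟩
    intro y hy
    have h1 : dist y z < (p:ℝ) ^ (-(l + k : ℤ)) := hy
    have h2 : dist z a ≤ (p:ℝ) ^ (-(l + k : ℤ)) := hz
    calc dist y a ≤ max (dist y z) (dist z a) := hultra y z a
      _ ≤ (p:ℝ) ^ (-(l + k : ℤ)) := max_le h1.le h2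
  have hbasis : TopologicalSpace.IsTopologicalBasis C := by
    refine TopologicalSpace.isTopologicalBasis_of_isOpen_of_nhds hopen ?_
    intro a u hau hu
    obtain ⟨ε, hε, hball_sub⟩ := Metric.isOpen_iff.mp hu a hau
    obtain ⟨m, hm⟩ := exists_pow_lt_of_lt_one hε
      (by rw [inv_lt_one_iff₀]; right; exact hp1 : (p:ℝ)⁻¹ < 1)
    refine ⟨{x | dist x a ≤ (p:ℝ) ^ (-(l + (m + 1 : ℕ) : ℤ))}, ⟨a, m + 1, by omega, rfl⟩, ?_, ?_⟩
    · show dist a a ≤ (p:ℝ) ^ (-(l + (m + 1 : ℕ) : ℤ))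
      rw [dist_self]
      exact (hrpos _).le
    · intro z hz
      apply hball_sub
      have hz' : dist z a ≤ (p:ℝ) ^ (-(l + (m + 1 : ℕ) : ℤ)) := hz
      have hle2 : (p:ℝ) ^ (-(l + (m + 1 : ℕ) : ℤ)) ≤ ((p:ℝ)⁻¹) ^ m := by
        have hh : ((p:ℝ)⁻¹) ^ m = (p:ℝ) ^ (-(m:ℤ)) := by
          rw [inv_pow, ← zpow_natCast, ← zpow_neg]
        rw [hh]
        apply zpow_le_zpow_right₀ hp1.le
        push_cast
        omega
      exact lt_of_le_of_lt (le_trans hz' hle2) hm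
  have hpi : IsPiSystem C := by
    rintro s ⟨a, k1, hk1, rfl⟩ t ⟨b, k2, hk2, rfl⟩ hne
    obtain ⟨z, hz1, hz2⟩ := hne
    have hz1' : dist z a ≤ (p:ℝ) ^ (-(l + k1 : ℤ)) := hz1
    have hz2' : dist z b ≤ (p:ℝ) ^ (-(l + k2 : ℤ)) := hz2
    have hmono : ∀ k k' : ℕ, k ≤ k' → (p:ℝ) ^ (-(l + k' : ℤ)) ≤ (p:ℝ) ^ (-(l + k : ℤ)) := by
      intro k k' hkk
      apply zpow_le_zpow_right₀ hp1.le
      omega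
    rcases le_total k1 k2 with hk | hk
    · refine ⟨z, k2, hk2, ?_⟩
      ext x
      simp only [Set.mem_inter_iff, Set.mem_setOf_eq]
      constructor
      · rintro ⟨hxa, hxb⟩
        calc dist x z ≤ max (dist x b) (dist b z) := hultra x b z
          _ ≤ (p:ℝ) ^ (-(l + k2 : ℤ)) := max_le hxb (by rw [dist_comm]; exact hz2')
      · intro hxz
        constructor
        · calc dist x a ≤ max (dist x z) (dist z a) := hultra x z a
            _ ≤ (p:ℝ) ^ (-(l + k1 : ℤ)) :=
              max_le (le_trans hxz (hmono k1 k2 hk)) hz1'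
        · calc dist x b ≤ max (dist x z) (dist z b) := hultra x z b
            _ ≤ (p:ℝ) ^ (-(l + k2 : ℤ)) := max_le hxz hz2'
    · refine ⟨z, k1, hk1, ?_⟩
      ext x
      simp only [Set.mem_inter_iff, Set.mem_setOf_eq]
      constructor
      · rintro ⟨hxa, hxb⟩
        calc dist x z ≤ max (dist x a) (dist a z) := hultra x a z
          _ ≤ (p:ℝ) ^ (-(l + k1 : ℤ)) := max_le hxa (by rw [dist_comm]; exact hz1')
      · intro hxz
        constructor
        · calc dist x a ≤ max (dist x z) (dist z a) := hultra x z a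
            _ ≤ (p:ℝ) ^ (-(l + k1 : ℤ)) := max_le hxz hz1'
        · calc dist x b ≤ max (dist x z) (dist z b) := hultra x z b
            _ ≤ (p:ℝ) ^ (-(l + k2 : ℤ)) :=
              max_le (le_trans hxz (hmono k2 k1 hk)) hz2'
  refine ext_of_generate_finite C ?_ hpi ?_ ?_
  · exact BorelSpace.measurable_eq.trans hbasis.borel_eq_generateFrom
  · rintro s ⟨a, k, hk, rfl⟩
    have hmsb : MeasurableSet {x : {x : ℤ_[p] // ‖x - 1‖ = (p : ℝ) ^ (-(l : ℤ))} |
        dist x a ≤ (p:ℝ) ^ (-(l + k : ℤ))} := measurableSet_closedBall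
    rw [Measure.map_apply hmeas hmsb]
    exact key k hk a
  · rw [Measure.map_apply hmeas MeasurableSet.univ]
    simp
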